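/- Let K be a compact Hausdorff space and let μ be a complex regular Borel measure on K. Then the holomorphic function f defined on the open unit ball of C(K) by f(x) = ∫_K x(t)/(1 − x(t)) dμ(t) is integral: there exists a complex Borel measure ν on the weak-* closed unit ball B' of the dual of C(K) such that f(x) = ∫_{B'} 1/(1 − γ(x)) dν(γ) for all x ∈ C(K) with ‖x‖_∞ < 1. -/
import Mathlib


open MeasureTheory Filter Topology

/-- The closed unit ball of the dual of `C(K, ℂ)`, with the weak-* topology. -/
abbrev DualBall (K : Type*) [TopologicalSpace K] [CompactSpace K] : Type _ :=
  {γ : WeakDual ℂ C(K, ℂ) // ∀ x : C(K, ℂ), ‖γ x‖ ≤ ‖x‖}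

/-- Borel σ-algebra on the weak-* dual unit ball. -/
noncomputable instance (K : Type*) [TopologicalSpace K] [CompactSpace K] :
    MeasurableSpace (DualBall K) := borel (DualBall K)

instance (K : Type*) [TopologicalSpace K] [CompactSpace K] :
    BorelSpace (DualBall K) := ⟨rfl⟩

/-- Let `μ` be a complex regular Borel measure on `K` (encoded in polar form
`w · μ` with `μ` finite positive regular and `w` unimodular).  Then the
holomorphic function `f x = ∫_K x(t)/(1 - x(t)) dμ(t)` on the open unit ball
of `C(K)` is integral: it is of the form `f x = ∫_{B'} (1 - γ(x))⁻¹ dν(γ)` for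
some complex Borel measure (in polar form `u · ν`) on the weak-* dual unit
ball. -/
theorem integralFn_of_measure_on_K
    {K : Type*} [TopologicalSpace K] [CompactSpace K] [T2Space K]
    [MeasurableSpace K] [BorelSpace K]
    (μ : Measure K) [IsFiniteMeasure μ] (hreg : μ.Regular)
    (w : K → ℂ) (hw : Measurable w) (hw1 : ∀ t, ‖w t‖ = 1)
    (f : C(K, ℂ) → ℂ)
    (hfdef : ∀ x : C(K, ℂ), ‖x‖ < 1 → f x = ∫ t, (x t / (1 - x t)) * w t ∂μ) :
    ∃ (ν : Measure (DualBall K)) (u : DualBall K → ℂ),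
      IsFiniteMeasure ν ∧ Measurable u ∧ (∀ γ, ‖u γ‖ = 1) ∧
      ∀ x : C(K, ℂ), ‖x‖ < 1 → f x = ∫ γ, (1 - γ.1 x)⁻¹ * u γ ∂ν := by
  classical
  -- the evaluation embedding K → DualBall K
  let δ : K → DualBall K := fun t =>
    ⟨(ContinuousMap.evalCLM ℂ t : C(K, ℂ) →L[ℂ] ℂ), fun x => x.norm_coe_le_norm t⟩
  have hδ_apply : ∀ t (x : C(K, ℂ)), (δ t).1 x = x t := fun t x => rfl
  have hδcont : Continuous δ := by
    apply Continuous.subtype_mk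
    exact WeakDual.continuous_of_continuous_eval fun x => x.continuous
  have hδinj : Function.Injective δ := by
    intro s t h
    by_contra hst
    obtain ⟨g, hg0, hg1, -⟩ := exists_continuous_zero_one_of_isClosed
      (isClosed_singleton (x := s)) (isClosed_singleton (x := t))
      (by simpa using hst)
    let x : C(K, ℂ) := ⟨fun p => (g p : ℂ), Complex.continuous_ofReal.comp g.continuous⟩
    have h1 : (δ s).1 x = (δ t).1 x := by rw [h]
    have : ((g s : ℝ) : ℂ) = ((g t : ℝ) : ℂ) := h1
    rw [hg0 rfl, hg1 rfl] at this
    simp at this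
  have hemb : MeasurableEmbedding δ :=
    (hδcont.isClosedEmbedding hδinj).measurableEmbedding
  -- constants for the extra point mass at 0
  set c : ℂ := ∫ t, w t ∂μ with hc
  set s₀ : ℂ := if c = 0 then 1 else (-c) / (‖c‖ : ℂ) with hs₀
  have hs₀1 : ‖s₀‖ = 1 := by
    rw [hs₀]
    split_ifs with h
    · simp
    · rw [norm_div, norm_neg]
      rw [Complex.norm_real, norm_norm]
      exact div_self (norm_ne_zero_iff.2 h)
  have hrs₀ : (‖c‖ : ℂ) * s₀ = -c := by
    rw [hs₀]
    split_ifs with h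
    · simp [h]
    · have hne : ((‖c‖ : ℝ) : ℂ) ≠ 0 := by
        exact_mod_cast Complex.ofReal_ne_zero.2 (norm_ne_zero_iff.2 h)
      rw [mul_comm, div_mul_cancel₀ _ hne]
  let γ₀ : DualBall K := ⟨0, fun x => by
    rw [show ((0 : WeakDual ℂ C(K, ℂ)) x) = 0 from rfl]
    simp⟩
  have hγ₀_not : ¬∃ t, δ t = γ₀ := by
    rintro ⟨t, ht⟩
    have : (δ t).1 (1 : C(K, ℂ)) = γ₀.1 (1 : C(K, ℂ)) := by rw [ht]
    rw [hδ_apply] at this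
    have h1 : ((1 : C(K, ℂ)) t : ℂ) = 1 := rfl
    have h0 : γ₀.1 (1 : C(K, ℂ)) = 0 := rfl
    rw [h1, h0] at this
    exact one_ne_zero this
  set u : DualBall K → ℂ := Function.extend δ w (fun _ => s₀) with hu
  have hu_δ : ∀ t, u (δ t) = w t := fun t => hδinj.extend_apply _ _ t
  have hu_γ₀ : u γ₀ = s₀ := Function.extend_apply' _ _ _ hγ₀_not
  have hu_meas : Measurable u := hemb.measurable_extend hw measurable_const
  have hu1 : ∀ γ, ‖u γ‖ = 1 := by
    intro γ
    by_cases h : ∃ t, δ t = γ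
    · obtain ⟨t, rfl⟩ := h
      rw [hu_δ]; exact hw1 t
    · rw [hu, Function.extend_apply' _ _ _ h]; exact hs₀1
  set ν : Measure (DualBall K) :=
    Measure.map δ μ + (ENNReal.ofReal ‖c‖) • Measure.dirac γ₀ with hν
  have hνfin : IsFiniteMeasure ν := by
    constructor
    have hh : ν Set.univ = μ Set.univ + ENNReal.ofReal ‖c‖ * 1 := by
      rw [hν]
      simp [Measure.map_apply hδcont.measurable MeasurableSet.univ]
    rw [hh]
    exact ENNReal.add_lt_top.2 ⟨measure_lt_top _ _,
      ENNReal.mul_lt_top ENNReal.ofReal_lt_top (by simp)⟩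
  refine ⟨ν, u, hνfin, hu_meas, hu1, ?_⟩
  intro x hx
  -- basic bounds
  have hxt : ∀ t, ‖x t‖ < 1 := fun t => lt_of_le_of_lt (x.norm_coe_le_norm t) hx
  have hne : ∀ t : K, (1 : ℂ) - x t ≠ 0 := by
    intro t h
    have : ‖x t‖ = 1 := by
      have : x t = 1 := by linear_combination -h
      rw [this]; simp
    exact absurd this (ne_of_lt (hxt t))
  have hbound : ∀ t, ‖(1 - x t)⁻¹ * w t‖ ≤ (1 - ‖x‖)⁻¹ := by
    intro t
    rw [norm_mul, hw1, mul_one, norm_inv]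
    apply inv_anti₀ (by linarith)
    calc 1 - ‖x‖ ≤ 1 - ‖x t‖ := by
          have := x.norm_coe_le_norm t; linarith
      _ ≤ ‖(1 : ℂ)‖ - ‖x t‖ := by simp
      _ ≤ ‖1 - x t‖ := norm_sub_norm_le _ _
  have hmeas1 : Measurable fun t => (1 - x t)⁻¹ * w t :=
    (((measurable_const.sub x.continuous.measurable).inv)).mul hw
  have hint1 : Integrable (fun t => (1 - x t)⁻¹ * w t) μ :=
    ⟨hmeas1.aestronglyMeasurable,
      HasFiniteIntegral.of_bounded (C := (1 - ‖x‖)⁻¹) (.of_forall hbound)⟩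
  have hintw : Integrable w μ :=
    ⟨hw.aestronglyMeasurable,
      HasFiniteIntegral.of_bounded (C := 1) (.of_forall fun t => le_of_eq (hw1 t))⟩
  -- Step A: f x = ∫ (1 - x t)⁻¹ w t dμ - c
  have stepA : f x = (∫ t, (1 - x t)⁻¹ * w t ∂μ) - c := by
    rw [hfdef x hx, hc, ← integral_sub hint1 hintw]
    congr 1
    funext t
    field_simp [hne t]
    ring
  -- integrability over ν's pieces
  set g : DualBall K → ℂ := fun γ => (1 - γ.1 x)⁻¹ * u γ with hg
  have hgδ : ∀ t, g (δ t) = (1 - x t)⁻¹ * w t := by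
    intro t; rw [hg]; simp only [hδ_apply, hu_δ]
  have hg_meas : Measurable g := by
    apply Measurable.mul _ hu_meas
    apply Measurable.inv
    apply Measurable.sub measurable_const
    have : Continuous fun γ : DualBall K => γ.1 x :=
      (WeakDual.eval_continuous x).comp continuous_subtype_val
    exact this.measurable
  have hint_map : Integrable g (Measure.map δ μ) := by
    rw [hemb.integrable_map_iff]
    have : (g ∘ δ) = fun t => (1 - x t)⁻¹ * w t := funext hgδ
    rw [this]; exact hint1
  have hint_dirac : Integrable g ((ENNReal.ofReal ‖c‖) • Measure.dirac γ₀) := by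
    refine ⟨hg_meas.aestronglyMeasurable, ?_⟩
    rw [HasFiniteIntegral, lintegral_smul_measure, lintegral_dirac]
    exact ENNReal.mul_lt_top ENNReal.ofReal_lt_top (by simp)
  -- compute the integral
  rw [stepA, hν, integral_add_measure hint_map hint_dirac]
  have e1 : ∫ γ, g γ ∂(Measure.map δ μ) = ∫ t, (1 - x t)⁻¹ * w t ∂μ := by
    rw [hemb.integral_map]
    exact integral_congr_ae (.of_forall hgδ)
  have e2 : ∫ γ, g γ ∂((ENNReal.ofReal ‖c‖) • Measure.dirac γ₀) = -c := by
    rw [integral_smul_measure, integral_dirac]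
    have hgγ₀ : g γ₀ = s₀ := by
      show (1 - γ₀.1 x)⁻¹ * u γ₀ = s₀
      have h0 : γ₀.1 x = 0 := rfl
      rw [h0, hu_γ₀]; simp
    rw [hgγ₀, ENNReal.toReal_ofReal (norm_nonneg c)]
    rw [← hrs₀, Complex.real_smul]
  rw [e1, e2]
  ring
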